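/- arXiv:2006.13271 — 3 statements merged into one kernel-verified Lean document; each statement's English description precedes it below -/
import Mathlib

section
/- Every ℂ-linear derivation v : A₀ → A₀ satisfies v(z̄₁) ∈ (z̄₁, θ̄₁) and v(z̄₂) ∈ (z̄₂, θ̄₂), where (z̄ᵢ, θ̄ᵢ) denotes the ideal of A₀ generated by z̄ᵢ and θ̄ᵢ. -/
open MvPolynomial

noncomputable section

/-- The polynomial ring `ℂ[z₁,z₂,θ₁,θ₂]`:
variables `X 0 = z₁`, `X 1 = z₂`, `X 2 = θ₁`, `X 3 = θ₂`. -/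
abbrev P4 : Type := MvPolynomial (Fin 4) ℂ

/-- The ideal `(z₁z₂, z₁θ₂, z₂θ₁, θ₁θ₂, θ₁², θ₂²)` of relations of the NS node. -/
def nsIdeal0 : Ideal P4 :=
  Ideal.span {X 0 * X 1, X 0 * X 3, X 1 * X 2, X 2 * X 3, X 2 ^ 2, X 3 ^ 2}

/-- The local coordinate ring `A₀` of an NS node of a stable supercurve. -/
abbrev A0 : Type := P4 ⧸ nsIdeal0

/-- `z̄₁ ∈ A₀`. -/
def z1 : A0 := Ideal.Quotient.mk nsIdeal0 (X 0)
/-- `z̄₂ ∈ A₀`. -/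
def z2 : A0 := Ideal.Quotient.mk nsIdeal0 (X 1)
/-- `θ̄₁ ∈ A₀`. -/
def th1 : A0 := Ideal.Quotient.mk nsIdeal0 (X 2)
/-- `θ̄₂ ∈ A₀`. -/
def th2 : A0 := Ideal.Quotient.mk nsIdeal0 (X 3)

abbrev R2 : Type := MvPolynomial (Fin 2) ℂ

lemma prime_X0 : Prime (X 0 : R2) := by
  rw [← MulEquiv.prime_iff (MvPolynomial.finSuccEquiv ℂ 1).toMulEquiv]
  show Prime ((MvPolynomial.finSuccEquiv ℂ 1) (X 0))
  rw [MvPolynomial.finSuccEquiv_X_zero]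
  exact Polynomial.prime_X

lemma not_dvd_X01 : ¬ (X 0 : R2) ∣ X 1 := by
  rintro ⟨c, hc⟩
  have := congrArg (aeval (![0, 1] : Fin 2 → ℂ)) hc
  simp at this

def psi1 : P4 →ₐ[ℂ] R2 := aeval ![0, X 1, 0, X 0]
def iota1 : R2 →ₐ[ℂ] P4 := aeval ![X 3, X 1]

lemma sub_mem1 (p : P4) : p - iota1 (psi1 p) ∈ Ideal.span {(X 0 : P4), X 2} := by
  induction p using MvPolynomial.induction_on with
  | C a => simp [psi1, iota1]
  | add p q hp hq =>
      have := Ideal.add_mem _ hp hq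
      convert this using 1
      simp only [map_add]; ring
  | mul_X p i hp =>
      have h1 : p * X i - iota1 (psi1 (p * X i))
          = (p - iota1 (psi1 p)) * X i + iota1 (psi1 p) * (X i - iota1 (psi1 (X i))) := by
        simp only [map_mul]; ring
      rw [h1]
      refine Ideal.add_mem _ (Ideal.mul_mem_right _ _ hp) (Ideal.mul_mem_left _ _ ?_)
      fin_cases i <;> simp [psi1, iota1] <;>
        first
          | exact Ideal.subset_span (by simp)
          | skip

lemma key1 (p q : P4) (h : X 1 * p + X 0 * q ∈ nsIdeal0) :
    p ∈ Ideal.span {(X 0 : P4), X 2, X 3 ^ 2} := by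
  have hmap : psi1 (X 1 * p + X 0 * q) ∈ Ideal.map (psi1 : P4 →+* R2) nsIdeal0 :=
    Ideal.mem_map_of_mem _ h
  have hle : Ideal.map (psi1 : P4 →+* R2) nsIdeal0 ≤ Ideal.span {(X 0 : R2) ^ 2} := by
    rw [nsIdeal0, Ideal.map_span]
    refine Ideal.span_le.2 ?_
    rintro x ⟨y, hy, rfl⟩
    simp only [Set.mem_insert_iff, Set.mem_singleton_iff] at hy
    rcases hy with rfl | rfl | rfl | rfl | rfl | rfl <;>
      simp [psi1] <;>
      first
        | exact Ideal.subset_span rfl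
        | skip
  have h2 : (X 1 : R2) * psi1 p ∈ Ideal.span {(X 0 : R2) ^ 2} := by
    have h3 := hle hmap
    have h4 : psi1 (X 1 * p + X 0 * q) = X 1 * psi1 p := by
      simp [psi1, map_add, map_mul]
    rwa [h4] at h3
  rw [Ideal.mem_span_singleton] at h2
  have hdvd : (X 0 : R2) ^ 2 ∣ psi1 p :=
    prime_X0.pow_dvd_of_dvd_mul_left 2 not_dvd_X01 h2
  obtain ⟨s, hs⟩ := hdvd
  have hp : p = (p - iota1 (psi1 p)) + X 3 ^ 2 * iota1 s := by
    have hx0 : iota1 (X 0) = X 3 := by simp [iota1]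
    rw [hs, map_mul, map_pow, hx0]; ring
  rw [hp]
  refine Ideal.add_mem _ ?_ (Ideal.mul_mem_right _ _
    (Ideal.subset_span (by right; right; rfl)))
  refine Ideal.span_mono ?_ (sub_mem1 p)
  intro x hx
  simp only [Set.mem_insert_iff, Set.mem_singleton_iff] at hx ⊢
  tauto

def psi2 : P4 →ₐ[ℂ] R2 := aeval ![X 1, 0, X 0, 0]
def iota2 : R2 →ₐ[ℂ] P4 := aeval ![X 2, X 0]

lemma sub_mem2 (p : P4) : p - iota2 (psi2 p) ∈ Ideal.span {(X 1 : P4), X 3} := by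
  induction p using MvPolynomial.induction_on with
  | C a => simp [psi2, iota2]
  | add p q hp hq =>
      have := Ideal.add_mem _ hp hq
      convert this using 1
      simp only [map_add]; ring
  | mul_X p i hp =>
      have h1 : p * X i - iota2 (psi2 (p * X i))
          = (p - iota2 (psi2 p)) * X i + iota2 (psi2 p) * (X i - iota2 (psi2 (X i))) := by
        simp only [map_mul]; ring
      rw [h1]
      refine Ideal.add_mem _ (Ideal.mul_mem_right _ _ hp) (Ideal.mul_mem_left _ _ ?_)
      fin_cases i <;> simp [psi2, iota2] <;>
        first
          | exact Ideal.subset_span (by simp)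
          | skip

lemma key2 (p q : P4) (h : X 0 * p + X 1 * q ∈ nsIdeal0) :
    p ∈ Ideal.span {(X 1 : P4), X 3, X 2 ^ 2} := by
  have hmap : psi2 (X 0 * p + X 1 * q) ∈ Ideal.map (psi2 : P4 →+* R2) nsIdeal0 :=
    Ideal.mem_map_of_mem _ h
  have hle : Ideal.map (psi2 : P4 →+* R2) nsIdeal0 ≤ Ideal.span {(X 0 : R2) ^ 2} := by
    rw [nsIdeal0, Ideal.map_span]
    refine Ideal.span_le.2 ?_
    rintro x ⟨y, hy, rfl⟩
    simp only [Set.mem_insert_iff, Set.mem_singleton_iff] at hy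
    rcases hy with rfl | rfl | rfl | rfl | rfl | rfl <;>
      simp [psi2] <;>
      first
        | exact Ideal.subset_span rfl
        | skip
  have h2 : (X 1 : R2) * psi2 p ∈ Ideal.span {(X 0 : R2) ^ 2} := by
    have h3 := hle hmap
    have h4 : psi2 (X 0 * p + X 1 * q) = X 1 * psi2 p := by
      simp [psi2, map_add, map_mul]
    rwa [h4] at h3
  rw [Ideal.mem_span_singleton] at h2
  have hdvd : (X 0 : R2) ^ 2 ∣ psi2 p :=
    prime_X0.pow_dvd_of_dvd_mul_left 2 not_dvd_X01 h2
  obtain ⟨s, hs⟩ := hdvd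
  have hp : p = (p - iota2 (psi2 p)) + X 2 ^ 2 * iota2 s := by
    have hx0 : iota2 (X 0) = X 2 := by simp [iota2]
    rw [hs, map_mul, map_pow, hx0]; ring
  rw [hp]
  refine Ideal.add_mem _ ?_ (Ideal.mul_mem_right _ _
    (Ideal.subset_span (by right; right; rfl)))
  refine Ideal.span_mono ?_ (sub_mem2 p)
  intro x hx
  simp only [Set.mem_insert_iff, Set.mem_singleton_iff] at hx ⊢
  tauto


/-- every ℂ-linear derivation `v : A₀ → A₀` satisfies
`v(z̄₁) ∈ (z̄₁, θ̄₁)` and `v(z̄₂) ∈ (z̄₂, θ̄₂)`. -/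
theorem derivation_at_NS_node :
    ∀ v : Derivation ℂ A0 A0,
      v z1 ∈ Ideal.span {z1, th1} ∧ v z2 ∈ Ideal.span {z2, th2} := by
  intro v
  have hz : z1 * z2 = 0 := by
    rw [z1, z2, ← map_mul]
    exact Ideal.Quotient.eq_zero_iff_mem.2 (Ideal.subset_span (by left; rfl))
  obtain ⟨p, hp⟩ := Ideal.Quotient.mk_surjective (v z1)
  obtain ⟨q, hq⟩ := Ideal.Quotient.mk_surjective (v z2)
  have hleib : z1 * v z2 + z2 * v z1 = 0 := by
    have h5 := v.leibniz z1 z2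
    rw [hz, map_zero] at h5
    simpa [smul_eq_mul] using h5.symm
  have hmem : X 1 * p + X 0 * q ∈ nsIdeal0 := by
    rw [← Ideal.Quotient.eq_zero_iff_mem]
    have h6 : Ideal.Quotient.mk nsIdeal0 (X 1 * p + X 0 * q)
        = z2 * v z1 + z1 * v z2 := by
      rw [map_add, map_mul, map_mul, hp, hq, z1, z2]
    rw [h6, add_comm]
    exact hleib
  have hmem' : X 0 * q + X 1 * p ∈ nsIdeal0 := by
    rw [add_comm]; exact hmem
  constructor
  · have h1 := key1 p q hmem
    rw [← hp]
    have hmm : Ideal.Quotient.mk nsIdeal0 p ∈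
        Ideal.map (Ideal.Quotient.mk nsIdeal0) (Ideal.span {(X 0 : P4), X 2, X 3 ^ 2}) :=
      Ideal.mem_map_of_mem _ h1
    have hle : Ideal.map (Ideal.Quotient.mk nsIdeal0) (Ideal.span {(X 0 : P4), X 2, X 3 ^ 2})
        ≤ Ideal.span {z1, th1} := by
      rw [Ideal.map_span]
      refine Ideal.span_le.2 ?_
      rintro x ⟨y, hy, rfl⟩
      simp only [Set.mem_insert_iff, Set.mem_singleton_iff] at hy
      rcases hy with rfl | rfl | rfl
      · exact Ideal.subset_span (by left; rw [z1])
      · exact Ideal.subset_span (by right; rw [th1]; exact rfl)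
      · have hz3 : Ideal.Quotient.mk nsIdeal0 (X 3 ^ 2) = 0 :=
          Ideal.Quotient.eq_zero_iff_mem.2 (Ideal.subset_span (by simp))
        rw [hz3]; exact Ideal.zero_mem _
    exact hle hmm
  · have h1 := key2 q p hmem'
    rw [← hq]
    have hmm : Ideal.Quotient.mk nsIdeal0 q ∈
        Ideal.map (Ideal.Quotient.mk nsIdeal0) (Ideal.span {(X 1 : P4), X 3, X 2 ^ 2}) :=
      Ideal.mem_map_of_mem _ h1
    have hle : Ideal.map (Ideal.Quotient.mk nsIdeal0) (Ideal.span {(X 1 : P4), X 3, X 2 ^ 2})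
        ≤ Ideal.span {z2, th2} := by
      rw [Ideal.map_span]
      refine Ideal.span_le.2 ?_
      rintro x ⟨y, hy, rfl⟩
      simp only [Set.mem_insert_iff, Set.mem_singleton_iff] at hy
      rcases hy with rfl | rfl | rfl
      · exact Ideal.subset_span (by left; rw [z2])
      · exact Ideal.subset_span (by right; rw [th2]; exact rfl)
      · have hz2 : Ideal.Quotient.mk nsIdeal0 (X 2 ^ 2) = 0 :=
          Ideal.Quotient.eq_zero_iff_mem.2 (Ideal.subset_span (by simp))
        rw [hz2]; exact Ideal.zero_mem _
    exact hle hmm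

end
end

section
/- The ring A₀ is a free ℂ-vector space with basis consisting of: the element 1, the elements z̄₁ⁿ for n ≥ 1, the elements z̄₂ⁿ for n ≥ 1, the elements z̄₁ⁿθ̄₁ for n ≥ 0, and the elements z̄₂ⁿθ̄₂ for n ≥ 0. -/
open MvPolynomial

noncomputable section

/-- Index type for the ℂ-basis: `1`; `z̄₁ⁿ (n ≥ 1)`; `z̄₂ⁿ (n ≥ 1)`;
`z̄₁ⁿθ̄₁ (n ≥ 0)`; `z̄₂ⁿθ̄₂ (n ≥ 0)`. -/
abbrev BasisIdx : Type := Unit ⊕ ℕ ⊕ ℕ ⊕ ℕ ⊕ ℕ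

/-- The claimed ℂ-basis of `A₀`. -/
def a0Basis : BasisIdx → A0
  | Sum.inl _ => 1
  | Sum.inr (Sum.inl n) => z1 ^ (n + 1)
  | Sum.inr (Sum.inr (Sum.inl n)) => z2 ^ (n + 1)
  | Sum.inr (Sum.inr (Sum.inr (Sum.inl n))) => z1 ^ n * th1
  | Sum.inr (Sum.inr (Sum.inr (Sum.inr n))) => z2 ^ n * th2

abbrev DP : Type := DualNumber (Polynomial ℂ)
abbrev Bmod : Type := DP × DP
def vmap : Fin 4 → Bmod :=
  ![(TrivSqZeroExt.inl Polynomial.X, 0), (0, TrivSqZeroExt.inl Polynomial.X),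
    (DualNumber.eps, 0), (0, DualNumber.eps)]
def PhiP : P4 →ₐ[ℂ] Bmod := aeval vmap

lemma PhiP_gen_zero : ∀ a ∈ nsIdeal0, PhiP a = 0 := by
  have h : nsIdeal0 ≤ RingHom.ker (PhiP : P4 →+* Bmod) := by
    rw [nsIdeal0, Ideal.span_le]
    rintro p hp
    simp only [Set.mem_insert_iff, Set.mem_singleton_iff] at hp
    rcases hp with rfl|rfl|rfl|rfl|rfl|rfl <;>
      simp [RingHom.mem_ker, PhiP, vmap, Prod.ext_iff, sq, DualNumber.eps_mul_eps]
  intro a ha; exact h ha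

def Phi : (P4 ⧸ nsIdeal0) →ₐ[ℂ] Bmod := Ideal.Quotient.liftₐ nsIdeal0 PhiP PhiP_gen_zero

lemma Phi_mk (p : P4) : Phi (Ideal.Quotient.mk nsIdeal0 p) = PhiP p := by
  simp [Phi, Ideal.Quotient.liftₐ_apply]
  rfl


open TrivSqZeroExt in
def psi : Bmod →ₗ[ℂ] (BasisIdx → ℂ) where
  toFun x i := match i with
    | Sum.inl _ => (fst x.1).coeff 0
    | Sum.inr (Sum.inl n) => (fst x.1).coeff (n+1)
    | Sum.inr (Sum.inr (Sum.inl n)) => (fst x.2).coeff (n+1)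
    | Sum.inr (Sum.inr (Sum.inr (Sum.inl n))) => (snd x.1).coeff n
    | Sum.inr (Sum.inr (Sum.inr (Sum.inr n))) => (snd x.2).coeff n
  map_add' x y := by
    funext i
    rcases i with _|n|n|n|n <;> simp
  map_smul' c x := by
    funext i
    rcases i with _|n|n|n|n <;> simp

open TrivSqZeroExt Polynomial in
lemma Phi_z1_pow (n : ℕ) : Phi (z1 ^ (n+1)) = (inl (Polynomial.X ^ (n+1) : Polynomial ℂ), 0) := by
  rw [map_pow, z1, Phi_mk]
  simp [PhiP, vmap, Prod.pow_mk, inl_pow, zero_pow (Nat.succ_ne_zero n)]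

open TrivSqZeroExt Polynomial in
lemma Phi_z2_pow (n : ℕ) : Phi (z2 ^ (n+1)) = (0, inl (Polynomial.X ^ (n+1) : Polynomial ℂ)) := by
  rw [map_pow, z2, Phi_mk]
  simp [PhiP, vmap, Prod.pow_mk, inl_pow, zero_pow (Nat.succ_ne_zero n)]

open TrivSqZeroExt Polynomial in
lemma Phi_z1_th1 (n : ℕ) : Phi (z1 ^ n * th1) = (inr (Polynomial.X ^ n : Polynomial ℂ), 0) := by
  rw [map_mul, map_pow, z1, th1, Phi_mk, Phi_mk]
  simp only [PhiP, MvPolynomial.aeval_X]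
  show ((TrivSqZeroExt.inl Polynomial.X, 0) : Bmod)^n * (DualNumber.eps, 0) = _
  rw [Prod.pow_mk, Prod.mk_mul_mk, inl_pow, mul_zero, DualNumber.eps,
    TrivSqZeroExt.inl_mul_inr, smul_eq_mul, mul_one]

open TrivSqZeroExt Polynomial in
lemma Phi_z2_th2 (n : ℕ) : Phi (z2 ^ n * th2) = (0, inr (Polynomial.X ^ n : Polynomial ℂ)) := by
  rw [map_mul, map_pow, z2, th2, Phi_mk, Phi_mk]
  simp only [PhiP, MvPolynomial.aeval_X]
  show ((0, TrivSqZeroExt.inl Polynomial.X) : Bmod)^n * (0, DualNumber.eps) = _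
  rw [Prod.pow_mk, Prod.mk_mul_mk, inl_pow, mul_zero, DualNumber.eps,
    TrivSqZeroExt.inl_mul_inr, smul_eq_mul, mul_one]

open TrivSqZeroExt Polynomial in
lemma psi_Phi_basis (i : BasisIdx) : psi (Phi (a0Basis i)) = Pi.single i 1 := by
  funext j
  rcases i with _|n|n|n|n <;> rcases j with _|m|m|m|m <;>
    simp [a0Basis, psi, Phi_z1_pow, Phi_z2_pow, Phi_z1_th1, Phi_z2_th2, map_one,
      Polynomial.coeff_X_pow, Pi.single_apply, Polynomial.coeff_one, eq_comm]

lemma indep : LinearIndependent ℂ a0Basis := by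
  have h1 : LinearIndependent ℂ (fun i : BasisIdx => (Finsupp.single i (1:ℂ))) :=
    (Finsupp.basisSingleOne (ι := BasisIdx) (R := ℂ)).linearIndependent
  have h2 : LinearIndependent ℂ (fun i : BasisIdx => (Pi.single i (1:ℂ) : BasisIdx → ℂ)) := by
    have h := h1.map' (Finsupp.lcoeFun : (BasisIdx →₀ ℂ) →ₗ[ℂ] BasisIdx → ℂ)
      (by rw [LinearMap.ker_eq_bot]; exact fun a b hab => DFunLike.coe_injective hab)
    have e : ((Finsupp.lcoeFun : (BasisIdx →₀ ℂ) →ₗ[ℂ] BasisIdx → ℂ) ∘ fun i : BasisIdx => (Finsupp.single i (1:ℂ)))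
        = fun i : BasisIdx => (Pi.single i (1:ℂ) : BasisIdx → ℂ) := by
      funext i; exact Finsupp.single_eq_pi_single i 1
    rwa [e] at h
  have h3 : LinearIndependent ℂ ((psi ∘ₗ Phi.toLinearMap) ∘ a0Basis) := by
    have e : ((psi ∘ₗ Phi.toLinearMap) ∘ a0Basis)
        = fun i : BasisIdx => (Pi.single i (1:ℂ) : BasisIdx → ℂ) := by
      funext i; exact psi_Phi_basis i
    rw [e]; exact h2
  exact h3.of_comp _

lemma gen_zero (p : P4)
    (hp : p ∈ ({X 0 * X 1, X 0 * X 3, X 1 * X 2, X 2 * X 3, X 2 ^ 2, X 3 ^ 2} : Set P4)) :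
    Ideal.Quotient.mk nsIdeal0 p = 0 :=
  Ideal.Quotient.eq_zero_iff_mem.2 (Ideal.subset_span hp)

lemma z1_z2 : z1 * z2 = 0 := by
  rw [z1, z2, ← map_mul]; exact gen_zero _ (by simp)
lemma z1_th2 : z1 * th2 = 0 := by
  rw [z1, th2, ← map_mul]; exact gen_zero _ (by simp)
lemma z2_th1 : z2 * th1 = 0 := by
  rw [z2, th1, ← map_mul]; exact gen_zero _ (by simp)
lemma th1_th2 : th1 * th2 = 0 := by
  rw [th1, th2, ← map_mul]; exact gen_zero _ (by simp)
lemma th1_sq : th1 * th1 = 0 := by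
  rw [th1, ← map_mul, ← sq]; exact gen_zero _ (by simp)
lemma th2_sq : th2 * th2 = 0 := by
  rw [th2, ← map_mul, ← sq]; exact gen_zero _ (by simp)

set_option maxHeartbeats 1000000 in
lemma span_top : Submodule.span ℂ (Set.range a0Basis) = ⊤ := by
  set S := Submodule.span ℂ (Set.range a0Basis) with hS
  have hbS : ∀ k, a0Basis k ∈ S := fun k => Submodule.subset_span ⟨k, rfl⟩
  have key : ∀ (i : Fin 4) (x : P4 ⧸ nsIdeal0), x ∈ S →
      x * Ideal.Quotient.mk nsIdeal0 (X i) ∈ S := by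
    intro i x hx
    induction hx using Submodule.span_induction with
    | mem b hb =>
      obtain ⟨j, rfl⟩ := hb
      fin_cases i
      · -- gen z1
        show a0Basis j * z1 ∈ S
        rcases j with _|n|n|n|n
        · simpa [a0Basis] using hbS (Sum.inr (Sum.inl 0))
        · have e : a0Basis (Sum.inr (Sum.inl n)) * z1 = a0Basis (Sum.inr (Sum.inl (n+1))) := by
            simp [a0Basis, pow_succ]
          rw [e]; exact hbS _
        · have e : a0Basis (Sum.inr (Sum.inr (Sum.inl n))) * z1 = z2 ^ n * (z1 * z2) := by
            simp [a0Basis]; ring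
          rw [e, z1_z2, mul_zero]; exact S.zero_mem
        · have e : a0Basis (Sum.inr (Sum.inr (Sum.inr (Sum.inl n)))) * z1
              = a0Basis (Sum.inr (Sum.inr (Sum.inr (Sum.inl (n+1))))) := by
            simp [a0Basis, pow_succ]; ring
          rw [e]; exact hbS _
        · have e : a0Basis (Sum.inr (Sum.inr (Sum.inr (Sum.inr n)))) * z1
              = z2 ^ n * (z1 * th2) := by
            simp [a0Basis]; ring
          rw [e, z1_th2, mul_zero]; exact S.zero_mem
      · -- gen z2
        show a0Basis j * z2 ∈ S
        rcases j with _|n|n|n|n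
        · simpa [a0Basis] using hbS (Sum.inr (Sum.inr (Sum.inl 0)))
        · have e : a0Basis (Sum.inr (Sum.inl n)) * z2 = z1 ^ n * (z1 * z2) := by
            simp [a0Basis, pow_succ]; ring
          rw [e, z1_z2, mul_zero]; exact S.zero_mem
        · have e : a0Basis (Sum.inr (Sum.inr (Sum.inl n))) * z2
              = a0Basis (Sum.inr (Sum.inr (Sum.inl (n+1)))) := by
            simp [a0Basis, pow_succ]
          rw [e]; exact hbS _
        · have e : a0Basis (Sum.inr (Sum.inr (Sum.inr (Sum.inl n)))) * z2
              = z1 ^ n * (z2 * th1) := by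
            simp [a0Basis]; ring
          rw [e, z2_th1, mul_zero]; exact S.zero_mem
        · have e : a0Basis (Sum.inr (Sum.inr (Sum.inr (Sum.inr n)))) * z2
              = a0Basis (Sum.inr (Sum.inr (Sum.inr (Sum.inr (n+1))))) := by
            simp [a0Basis, pow_succ]; ring
          rw [e]; exact hbS _
      · -- gen th1
        show a0Basis j * th1 ∈ S
        rcases j with _|n|n|n|n
        · simpa [a0Basis] using hbS (Sum.inr (Sum.inr (Sum.inr (Sum.inl 0))))
        · have e : a0Basis (Sum.inr (Sum.inl n)) * th1
              = a0Basis (Sum.inr (Sum.inr (Sum.inr (Sum.inl (n+1))))) := by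
            simp [a0Basis]
          rw [e]; exact hbS _
        · have e : a0Basis (Sum.inr (Sum.inr (Sum.inl n))) * th1
              = z2 ^ n * (z2 * th1) := by
            simp [a0Basis, pow_succ]; ring
          rw [e, z2_th1, mul_zero]; exact S.zero_mem
        · have e : a0Basis (Sum.inr (Sum.inr (Sum.inr (Sum.inl n)))) * th1
              = z1 ^ n * (th1 * th1) := by
            simp [a0Basis]; ring
          rw [e, th1_sq, mul_zero]; exact S.zero_mem
        · have e : a0Basis (Sum.inr (Sum.inr (Sum.inr (Sum.inr n)))) * th1
              = z2 ^ n * (th1 * th2) := by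
            simp [a0Basis]; ring
          rw [e, th1_th2, mul_zero]; exact S.zero_mem
      · -- gen th2
        show a0Basis j * th2 ∈ S
        rcases j with _|n|n|n|n
        · simpa [a0Basis] using hbS (Sum.inr (Sum.inr (Sum.inr (Sum.inr 0))))
        · have e : a0Basis (Sum.inr (Sum.inl n)) * th2
              = z1 ^ n * (z1 * th2) := by
            simp [a0Basis, pow_succ]; ring
          rw [e, z1_th2, mul_zero]; exact S.zero_mem
        · have e : a0Basis (Sum.inr (Sum.inr (Sum.inl n))) * th2
              = a0Basis (Sum.inr (Sum.inr (Sum.inr (Sum.inr (n+1))))) := by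
            simp [a0Basis]
          rw [e]; exact hbS _
        · have e : a0Basis (Sum.inr (Sum.inr (Sum.inr (Sum.inl n)))) * th2
              = z1 ^ n * (th1 * th2) := by
            simp [a0Basis]; ring
          rw [e, th1_th2, mul_zero]; exact S.zero_mem
        · have e : a0Basis (Sum.inr (Sum.inr (Sum.inr (Sum.inr n)))) * th2
              = z2 ^ n * (th2 * th2) := by
            simp [a0Basis]; ring
          rw [e, th2_sq, mul_zero]; exact S.zero_mem
    | zero => rw [zero_mul]; exact S.zero_mem
    | add x y _ _ ihx ihy => rw [add_mul]; exact S.add_mem ihx ihy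
    | smul a x _ ih => rw [smul_mul_assoc]; exact S.smul_mem a ih
  rw [eq_top_iff]
  rintro x -
  obtain ⟨p, rfl⟩ := Ideal.Quotient.mk_surjective x
  induction p using MvPolynomial.induction_on with
  | C a =>
    have h1 : (Ideal.Quotient.mk nsIdeal0) (MvPolynomial.C a)
        = a • (1 : P4 ⧸ nsIdeal0) := by
      rw [← Algebra.algebraMap_eq_smul_one]
      rfl
    rw [h1]
    exact S.smul_mem a (hbS (Sum.inl ()))
  | add p q hp hq => rw [map_add]; exact S.add_mem hp hq
  | mul_X p i hp => rw [map_mul]; exact key i _ hp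

/-- `A₀` is a free ℂ-vector space with the indicated basis. -/
theorem A0_basis_over_C :
    LinearIndependent ℂ a0Basis ∧ Submodule.span ℂ (Set.range a0Basis) = ⊤ :=
  ⟨indep, span_top⟩

end
end

section
/- Let Ω be the A₀-module with generators dz₁, dz₂, dθ₁, dθ₂ and defining relations z₂·dz₁ + z₁·dz₂ = 0, θ₂·dz₁ + z₁·dθ₂ = 0, θ₁·dz₂ + z₂·dθ₁ = 0, θ₂·dθ₁ − θ₁·dθ₂ = 0. Let A₁ = ℂ[z₁,θ₁]/(θ₁²) and A₂ = ℂ[z₂,θ₂]/(θ₂²) with the quotient ring maps p₁ : A₀ → A₁ (sending z₂, θ₂ to 0) and p₂ : A₀ → A₂ (sending z₁, θ₁ to 0), and let φ : Ω → (A₁ ⊕ A₁) ⊕ (A₂ ⊕ A₂) be the well-defined A₀-linear map sending the class of a·dz₁ + b·dz₂ + c·dθ₁ + e·dθ₂ to ((p₁(a), p₁(c)), (p₂(b), p₂(e))). Then the kernel of φ is a four-dimensional ℂ-vector space with basis the classes of z₁·dz₂, z₁·dθ₂, z₂·dθ₁, θ₁·dθ₂. -/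
open MvPolynomial

noncomputable section

set_option synthInstance.maxHeartbeats 400000
set_option maxHeartbeats 1000000

/-- The standard generators of the free module `A₀⁴`:
`dd 0 = dz₁`, `dd 1 = dz₂`, `dd 2 = dθ₁`, `dd 3 = dθ₂`. -/
def dd (i : Fin 4) : Fin 4 → A0 := Pi.single i 1

/-- The relations of the module `Ω` of super Kähler differentials of `A₀`:
`z₂·dz₁ + z₁·dz₂ = 0`, `θ₂·dz₁ + z₁·dθ₂ = 0`, `θ₁·dz₂ + z₂·dθ₁ = 0`,
`θ₂·dθ₁ − θ₁·dθ₂ = 0`. -/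
def omegaRels0 : Set (Fin 4 → A0) :=
  { z2 • dd 0 + z1 • dd 1,
    th2 • dd 0 + z1 • dd 3,
    th1 • dd 1 + z2 • dd 2,
    th2 • dd 2 - th1 • dd 3 }

/-- The submodule of relations of `Ω`. -/
def omegaRelMod0 : Submodule A0 (Fin 4 → A0) := Submodule.span A0 omegaRels0

/-- The module `Ω` of super Kähler differentials of `A₀`. -/
abbrev Omega0 : Type := (Fin 4 → A0) ⧸ omegaRelMod0

/-- The ideal `(z̄₂, θ̄₂)` cutting out the first branch. -/
def branchIdeal1 : Ideal A0 := Ideal.span {z2, th2}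
/-- The ideal `(z̄₁, θ̄₁)` cutting out the second branch. -/
def branchIdeal2 : Ideal A0 := Ideal.span {z1, th1}

/-- The coordinate ring `A₁ ≅ ℂ[z₁,θ₁]/(θ₁²)` of the first branch, with quotient map
`p₁ : A₀ → A₁` sending `z₂, θ₂` to `0`. -/
abbrev A1 : Type := A0 ⧸ branchIdeal1
/-- The coordinate ring `A₂ ≅ ℂ[z₂,θ₂]/(θ₂²)` of the second branch, with quotient map
`p₂ : A₀ → A₂` sending `z₁, θ₁` to `0`. -/
abbrev A2 : Type := A0 ⧸ branchIdeal2

/-- The classes of `z₁·dz₂`, `z₁·dθ₂`, `z₂·dθ₁`, `θ₁·dθ₂` in `Ω`. -/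
def kfam : Fin 4 → Omega0 :=
  ![Submodule.Quotient.mk (z1 • dd 1),
    Submodule.Quotient.mk (z1 • dd 3),
    Submodule.Quotient.mk (z2 • dd 2),
    Submodule.Quotient.mk (th1 • dd 3)]
namespace NSAux

lemma mk_gen_zero {p : P4}
    (hp : p ∈ ({X 0 * X 1, X 0 * X 3, X 1 * X 2, X 2 * X 3, X 2 ^ 2, X 3 ^ 2} : Set P4)) :
    Ideal.Quotient.mk nsIdeal0 p = 0 :=
  Ideal.Quotient.eq_zero_iff_mem.mpr (Ideal.subset_span hp)

lemma z1z2 : z1 * z2 = 0 := by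
  have := mk_gen_zero (p := X 0 * X 1) (by simp)
  simpa [z1, z2, map_mul] using this

lemma z1th2 : z1 * th2 = 0 := by
  have := mk_gen_zero (p := X 0 * X 3) (by simp)
  simpa [z1, th2, map_mul] using this

lemma z2th1 : z2 * th1 = 0 := by
  have := mk_gen_zero (p := X 1 * X 2) (by simp)
  simpa [z2, th1, map_mul] using this

lemma th1th2 : th1 * th2 = 0 := by
  have := mk_gen_zero (p := X 2 * X 3) (by simp)
  simpa [th1, th2, map_mul] using this

lemma th1th1 : th1 * th1 = 0 := by
  have := mk_gen_zero (p := X 2 ^ 2) (by simp)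
  simpa [th1, pow_two, map_mul] using this

lemma th2th2 : th2 * th2 = 0 := by
  have := mk_gen_zero (p := X 3 ^ 2) (by simp)
  simpa [th2, pow_two, map_mul] using this

lemma z2z1 : z2 * z1 = 0 := by rw [mul_comm]; exact z1z2
lemma th2z1 : th2 * z1 = 0 := by rw [mul_comm]; exact z1th2
lemma th1z2 : th1 * z2 = 0 := by rw [mul_comm]; exact z2th1
lemma th2th1 : th2 * th1 = 0 := by rw [mul_comm]; exact th1th2

end NSAux
namespace NSAux
lemma mk_C (r : ℂ) : Ideal.Quotient.mk nsIdeal0 (C r) = algebraMap ℂ A0 r :=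
  (IsScalarTower.algebraMap_apply ℂ P4 A0 r).symm
end NSAux
namespace NSAux

lemma r1_mem : z2 • dd 0 + z1 • dd 1 ∈ omegaRelMod0 :=
  Submodule.subset_span (by left; rfl)

lemma r2_mem : th2 • dd 0 + z1 • dd 3 ∈ omegaRelMod0 :=
  Submodule.subset_span (by right; left; rfl)

lemma r3_mem : th1 • dd 1 + z2 • dd 2 ∈ omegaRelMod0 :=
  Submodule.subset_span (by right; right; left; rfl)

lemma r4_mem : th2 • dd 2 - th1 • dd 3 ∈ omegaRelMod0 :=
  Submodule.subset_span (by right; right; right; rfl)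

lemma z1z1_dd1_mem : (z1 * z1) • dd 1 ∈ omegaRelMod0 := by
  have h := omegaRelMod0.smul_mem z1 r1_mem
  have e : z1 • (z2 • dd 0 + z1 • dd 1) = (z1 * z1) • dd 1 := by
    funext k
    simp only [Pi.smul_apply, Pi.add_apply, smul_eq_mul]
    linear_combination (dd 0 k) * z1z2
  rwa [e] at h

lemma z1th1_dd1_mem : (z1 * th1) • dd 1 ∈ omegaRelMod0 := by
  have h := omegaRelMod0.smul_mem th1 r1_mem
  have e : th1 • (z2 • dd 0 + z1 • dd 1) = (z1 * th1) • dd 1 := by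
    funext k
    simp only [Pi.smul_apply, Pi.add_apply, smul_eq_mul]
    linear_combination (dd 0 k) * th1z2
  rwa [e] at h

lemma z1z1_dd3_mem : (z1 * z1) • dd 3 ∈ omegaRelMod0 := by
  have h := omegaRelMod0.smul_mem z1 r2_mem
  have e : z1 • (th2 • dd 0 + z1 • dd 3) = (z1 * z1) • dd 3 := by
    funext k
    simp only [Pi.smul_apply, Pi.add_apply, smul_eq_mul]
    linear_combination (dd 0 k) * z1th2
  rwa [e] at h

lemma z1th1_dd3_mem : (z1 * th1) • dd 3 ∈ omegaRelMod0 := by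
  have h := omegaRelMod0.smul_mem th1 r2_mem
  have e : th1 • (th2 • dd 0 + z1 • dd 3) = (z1 * th1) • dd 3 := by
    funext k
    simp only [Pi.smul_apply, Pi.add_apply, smul_eq_mul]
    linear_combination (dd 0 k) * th1th2
  rwa [e] at h

lemma z2z2_dd2_mem : (z2 * z2) • dd 2 ∈ omegaRelMod0 := by
  have h := omegaRelMod0.smul_mem z2 r3_mem
  have e : z2 • (th1 • dd 1 + z2 • dd 2) = (z2 * z2) • dd 2 := by
    funext k
    simp only [Pi.smul_apply, Pi.add_apply, smul_eq_mul]
    linear_combination (dd 1 k) * z2th1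
  rwa [e] at h

lemma z2th2_dd2_mem : (z2 * th2) • dd 2 ∈ omegaRelMod0 := by
  have h := omegaRelMod0.smul_mem th2 r3_mem
  have e : th2 • (th1 • dd 1 + z2 • dd 2) = (z2 * th2) • dd 2 := by
    funext k
    simp only [Pi.smul_apply, Pi.add_apply, smul_eq_mul]
    linear_combination (dd 1 k) * th2th1
  rwa [e] at h

lemma z2z2_dd0_mem : (z2 * z2) • dd 0 ∈ omegaRelMod0 := by
  have h := omegaRelMod0.smul_mem z2 r1_mem
  have e : z2 • (z2 • dd 0 + z1 • dd 1) = (z2 * z2) • dd 0 := by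
    funext k
    simp only [Pi.smul_apply, Pi.add_apply, smul_eq_mul]
    linear_combination (dd 1 k) * z2z1
  rwa [e] at h

lemma z2th2_dd0_mem : (z2 * th2) • dd 0 ∈ omegaRelMod0 := by
  have h := omegaRelMod0.smul_mem th2 r1_mem
  have e : th2 • (z2 • dd 0 + z1 • dd 1) = (z2 * th2) • dd 0 := by
    funext k
    simp only [Pi.smul_apply, Pi.add_apply, smul_eq_mul]
    linear_combination (dd 1 k) * th2z1
  rwa [e] at h

end NSAux
namespace NSAux

lemma mul_z1 (a : A0) : ∃ (c : ℂ) (f g : A0),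
    a * z1 = algebraMap ℂ A0 c * z1 + f * (z1 * z1) + g * (z1 * th1) := by
  obtain ⟨p, rfl⟩ := Ideal.Quotient.mk_surjective a
  induction p using MvPolynomial.induction_on with
  | C r =>
      exact ⟨r, 0, 0, by rw [mk_C]; ring⟩
  | add p q hp hq =>
      obtain ⟨cp, fp, gp, ep⟩ := hp
      obtain ⟨cq, fq, gq, eq'⟩ := hq
      refine ⟨cp + cq, fp + fq, gp + gq, ?_⟩
      rw [map_add, add_mul, ep, eq', map_add]
      ring
  | mul_X p i _ =>
      rw [map_mul]
      fin_cases i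
      · exact ⟨0, Ideal.Quotient.mk nsIdeal0 p, 0, by
          show Ideal.Quotient.mk nsIdeal0 p * z1 * z1 = _
          rw [map_zero]; ring⟩
      · exact ⟨0, 0, 0, by
          show Ideal.Quotient.mk nsIdeal0 p * z2 * z1 = _
          rw [map_zero, mul_assoc, z2z1]; ring⟩
      · exact ⟨0, 0, Ideal.Quotient.mk nsIdeal0 p, by
          show Ideal.Quotient.mk nsIdeal0 p * th1 * z1 = _
          rw [map_zero]; ring⟩
      · exact ⟨0, 0, 0, by
          show Ideal.Quotient.mk nsIdeal0 p * th2 * z1 = _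
          rw [map_zero, mul_assoc, th2z1]; ring⟩

end NSAux
namespace NSAux

lemma mul_z2 (a : A0) : ∃ (c : ℂ) (f g : A0),
    a * z2 = algebraMap ℂ A0 c * z2 + f * (z2 * z2) + g * (z2 * th2) := by
  obtain ⟨p, rfl⟩ := Ideal.Quotient.mk_surjective a
  induction p using MvPolynomial.induction_on with
  | C r => exact ⟨r, 0, 0, by rw [mk_C]; ring⟩
  | add p q hp hq =>
      obtain ⟨cp, fp, gp, ep⟩ := hp
      obtain ⟨cq, fq, gq, eq'⟩ := hq
      refine ⟨cp + cq, fp + fq, gp + gq, ?_⟩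
      rw [map_add, add_mul, ep, eq', map_add]; ring
  | mul_X p i _ =>
      rw [map_mul]
      fin_cases i
      · exact ⟨0, 0, 0, by
          show Ideal.Quotient.mk nsIdeal0 p * z1 * z2 = _
          rw [map_zero, mul_assoc, z1z2]; ring⟩
      · exact ⟨0, Ideal.Quotient.mk nsIdeal0 p, 0, by
          show Ideal.Quotient.mk nsIdeal0 p * z2 * z2 = _
          rw [map_zero]; ring⟩
      · exact ⟨0, 0, 0, by
          show Ideal.Quotient.mk nsIdeal0 p * th1 * z2 = _
          rw [map_zero, mul_assoc, th1z2]; ring⟩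
      · exact ⟨0, 0, Ideal.Quotient.mk nsIdeal0 p, by
          show Ideal.Quotient.mk nsIdeal0 p * th2 * z2 = _
          rw [map_zero]; ring⟩

lemma mul_th1 (a : A0) : ∃ (c : ℂ) (f g : A0),
    a * th1 = algebraMap ℂ A0 c * th1 + f * (z1 * th1) + g * (z1 * th1) := by
  obtain ⟨p, rfl⟩ := Ideal.Quotient.mk_surjective a
  induction p using MvPolynomial.induction_on with
  | C r => exact ⟨r, 0, 0, by rw [mk_C]; ring⟩
  | add p q hp hq =>
      obtain ⟨cp, fp, gp, ep⟩ := hp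
      obtain ⟨cq, fq, gq, eq'⟩ := hq
      refine ⟨cp + cq, fp + fq, gp + gq, ?_⟩
      rw [map_add, add_mul, ep, eq', map_add]; ring
  | mul_X p i _ =>
      rw [map_mul]
      fin_cases i
      · exact ⟨0, Ideal.Quotient.mk nsIdeal0 p, 0, by
          show Ideal.Quotient.mk nsIdeal0 p * z1 * th1 = _
          rw [map_zero]; ring⟩
      · exact ⟨0, 0, 0, by
          show Ideal.Quotient.mk nsIdeal0 p * z2 * th1 = _
          rw [map_zero, mul_assoc, z2th1]; ring⟩
      · exact ⟨0, 0, 0, by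
          show Ideal.Quotient.mk nsIdeal0 p * th1 * th1 = _
          rw [map_zero, mul_assoc, th1th1]; ring⟩
      · exact ⟨0, 0, 0, by
          show Ideal.Quotient.mk nsIdeal0 p * th2 * th1 = _
          rw [map_zero, mul_assoc, th2th1]; ring⟩

lemma mul_th2 (a : A0) : ∃ (c : ℂ) (f g : A0),
    a * th2 = algebraMap ℂ A0 c * th2 + f * (z2 * th2) + g * (z2 * th2) := by
  obtain ⟨p, rfl⟩ := Ideal.Quotient.mk_surjective a
  induction p using MvPolynomial.induction_on with
  | C r => exact ⟨r, 0, 0, by rw [mk_C]; ring⟩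
  | add p q hp hq =>
      obtain ⟨cp, fp, gp, ep⟩ := hp
      obtain ⟨cq, fq, gq, eq'⟩ := hq
      refine ⟨cp + cq, fp + fq, gp + gq, ?_⟩
      rw [map_add, add_mul, ep, eq', map_add]; ring
  | mul_X p i _ =>
      rw [map_mul]
      fin_cases i
      · exact ⟨0, 0, 0, by
          show Ideal.Quotient.mk nsIdeal0 p * z1 * th2 = _
          rw [map_zero, mul_assoc, z1th2]; ring⟩
      · exact ⟨0, Ideal.Quotient.mk nsIdeal0 p, 0, by
          show Ideal.Quotient.mk nsIdeal0 p * z2 * th2 = _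
          rw [map_zero]; ring⟩
      · exact ⟨0, 0, 0, by
          show Ideal.Quotient.mk nsIdeal0 p * th1 * th2 = _
          rw [map_zero, mul_assoc, th1th2]; ring⟩
      · exact ⟨0, 0, 0, by
          show Ideal.Quotient.mk nsIdeal0 p * th2 * th2 = _
          rw [map_zero, mul_assoc, th2th2]; ring⟩

end NSAux
namespace NSAux

/-- The ℂ-span of the four classes. -/
def S : Submodule ℂ Omega0 := Submodule.span ℂ (Set.range kfam)

lemma kfam_mem_S (i : Fin 4) : kfam i ∈ S :=
  Submodule.subset_span (Set.mem_range_self i)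

lemma kfam0 : kfam 0 = Submodule.Quotient.mk (z1 • dd 1) := rfl
lemma kfam1 : kfam 1 = Submodule.Quotient.mk (z1 • dd 3) := rfl
lemma kfam2 : kfam 2 = Submodule.Quotient.mk (z2 • dd 2) := rfl
lemma kfam3 : kfam 3 = Submodule.Quotient.mk (th1 • dd 3) := rfl

lemma mk_eq_neg_of_rel {x y : Fin 4 → A0} (h : x + y ∈ omegaRelMod0) :
    (Submodule.Quotient.mk x : Omega0) = -Submodule.Quotient.mk y := by
  rw [eq_neg_iff_add_eq_zero, ← Submodule.Quotient.mk_add, Submodule.Quotient.mk_eq_zero]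
  exact h

lemma mk_z2dd0 : (Submodule.Quotient.mk (z2 • dd 0) : Omega0) ∈ S := by
  rw [mk_eq_neg_of_rel r1_mem, ← kfam0]; exact neg_mem (kfam_mem_S 0)

lemma mk_th2dd0 : (Submodule.Quotient.mk (th2 • dd 0) : Omega0) ∈ S := by
  rw [mk_eq_neg_of_rel r2_mem, ← kfam1]; exact neg_mem (kfam_mem_S 1)

lemma mk_z1dd1 : (Submodule.Quotient.mk (z1 • dd 1) : Omega0) ∈ S := kfam_mem_S 0

lemma mk_th1dd1 : (Submodule.Quotient.mk (th1 • dd 1) : Omega0) ∈ S := by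
  rw [mk_eq_neg_of_rel r3_mem, ← kfam2]; exact neg_mem (kfam_mem_S 2)

lemma mk_z2dd2 : (Submodule.Quotient.mk (z2 • dd 2) : Omega0) ∈ S := kfam_mem_S 2

lemma mk_th2dd2 : (Submodule.Quotient.mk (th2 • dd 2) : Omega0) ∈ S := by
  have h : (Submodule.Quotient.mk (th2 • dd 2) : Omega0) =
      Submodule.Quotient.mk (th1 • dd 3) := by
    rw [← sub_eq_zero, ← Submodule.Quotient.mk_sub, Submodule.Quotient.mk_eq_zero]
    exact r4_mem
  rw [h]; exact kfam_mem_S 3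

lemma mk_z1dd3 : (Submodule.Quotient.mk (z1 • dd 3) : Omega0) ∈ S := kfam_mem_S 1

lemma mk_th1dd3 : (Submodule.Quotient.mk (th1 • dd 3) : Omega0) ∈ S := kfam_mem_S 3

end NSAux
namespace NSAux

lemma key {a b : A0} {i : Fin 4} {c : ℂ} {f g u v : A0}
    (hmul : a * b = algebraMap ℂ A0 c * b + f * u + g * v)
    (hu : u • dd i ∈ omegaRelMod0) (hv : v • dd i ∈ omegaRelMod0)
    (hb : (Submodule.Quotient.mk (b • dd i) : Omega0) ∈ S) :
    (Submodule.Quotient.mk ((a * b) • dd i) : Omega0) ∈ S := by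
  rw [hmul, add_smul, add_smul, Submodule.Quotient.mk_add, Submodule.Quotient.mk_add]
  have h1 : (Submodule.Quotient.mk ((f * u) • dd i) : Omega0) = 0 := by
    rw [Submodule.Quotient.mk_eq_zero]
    convert omegaRelMod0.smul_mem f hu using 1; exact (smul_smul f u (dd i)).symm
  have h2 : (Submodule.Quotient.mk ((g * v) • dd i) : Omega0) = 0 := by
    rw [Submodule.Quotient.mk_eq_zero]
    convert omegaRelMod0.smul_mem g hv using 1; exact (smul_smul g v (dd i)).symm
  have h3 : (algebraMap ℂ A0 c * b) • dd i = c • (b • dd i) := by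
    rw [← Algebra.smul_def, smul_assoc]
  rw [h1, h2, h3, add_zero, add_zero, Submodule.Quotient.mk_smul]
  exact S.smul_mem c hb

lemma hdd0 {x : A0} (hx : x ∈ branchIdeal1) :
    (Submodule.Quotient.mk (x • dd 0) : Omega0) ∈ S := by
  obtain ⟨a, b, rfl⟩ := Ideal.mem_span_pair.mp hx
  rw [add_smul, Submodule.Quotient.mk_add]
  refine S.add_mem ?_ ?_
  · obtain ⟨c, f, g, e⟩ := mul_z2 a
    exact key e z2z2_dd0_mem z2th2_dd0_mem mk_z2dd0
  · obtain ⟨c, f, g, e⟩ := mul_th2 b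
    exact key e z2th2_dd0_mem z2th2_dd0_mem mk_th2dd0

lemma hdd1 {x : A0} (hx : x ∈ branchIdeal2) :
    (Submodule.Quotient.mk (x • dd 1) : Omega0) ∈ S := by
  obtain ⟨a, b, rfl⟩ := Ideal.mem_span_pair.mp hx
  rw [add_smul, Submodule.Quotient.mk_add]
  refine S.add_mem ?_ ?_
  · obtain ⟨c, f, g, e⟩ := mul_z1 a
    exact key e z1z1_dd1_mem z1th1_dd1_mem mk_z1dd1
  · obtain ⟨c, f, g, e⟩ := mul_th1 b
    exact key e z1th1_dd1_mem z1th1_dd1_mem mk_th1dd1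

lemma hdd2 {x : A0} (hx : x ∈ branchIdeal1) :
    (Submodule.Quotient.mk (x • dd 2) : Omega0) ∈ S := by
  obtain ⟨a, b, rfl⟩ := Ideal.mem_span_pair.mp hx
  rw [add_smul, Submodule.Quotient.mk_add]
  refine S.add_mem ?_ ?_
  · obtain ⟨c, f, g, e⟩ := mul_z2 a
    exact key e z2z2_dd2_mem z2th2_dd2_mem mk_z2dd2
  · obtain ⟨c, f, g, e⟩ := mul_th2 b
    exact key e z2th2_dd2_mem z2th2_dd2_mem mk_th2dd2

lemma hdd3 {x : A0} (hx : x ∈ branchIdeal2) :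
    (Submodule.Quotient.mk (x • dd 3) : Omega0) ∈ S := by
  obtain ⟨a, b, rfl⟩ := Ideal.mem_span_pair.mp hx
  rw [add_smul, Submodule.Quotient.mk_add]
  refine S.add_mem ?_ ?_
  · obtain ⟨c, f, g, e⟩ := mul_z1 a
    exact key e z1z1_dd3_mem z1th1_dd3_mem mk_z1dd3
  · obtain ⟨c, f, g, e⟩ := mul_th1 b
    exact key e z1th1_dd3_mem z1th1_dd3_mem mk_th1dd3

lemma decomp (v : Fin 4 → A0) :
    v = v 0 • dd 0 + v 1 • dd 1 + v 2 • dd 2 + v 3 • dd 3 := by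
  funext j
  fin_cases j <;>
    simp [dd, Pi.single_apply]

lemma mk_mem_S_of_branches {v : Fin 4 → A0}
    (h0 : v 0 ∈ branchIdeal1) (h1 : v 1 ∈ branchIdeal2)
    (h2 : v 2 ∈ branchIdeal1) (h3 : v 3 ∈ branchIdeal2) :
    (Submodule.Quotient.mk v : Omega0) ∈ S := by
  rw [decomp v, Submodule.Quotient.mk_add, Submodule.Quotient.mk_add,
    Submodule.Quotient.mk_add]
  exact S.add_mem (S.add_mem (S.add_mem (hdd0 h0) (hdd1 h1)) (hdd2 h2)) (hdd3 h3)

end NSAux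
namespace NSAux

/-- The linear map `A₀⁴ → (A₁ × A₁) × (A₂ × A₂)`. -/
def psi0 : (Fin 4 → A0) →ₗ[A0] (A1 × A1) × (A2 × A2) :=
  ((branchIdeal1.mkQ.comp (LinearMap.proj 0)).prod
    (branchIdeal1.mkQ.comp (LinearMap.proj 2))).prod
  ((branchIdeal2.mkQ.comp (LinearMap.proj 1)).prod
    (branchIdeal2.mkQ.comp (LinearMap.proj 3)))

lemma psi0_apply (v : Fin 4 → A0) :
    psi0 v = ((Ideal.Quotient.mk branchIdeal1 (v 0), Ideal.Quotient.mk branchIdeal1 (v 2)),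
              (Ideal.Quotient.mk branchIdeal2 (v 1), Ideal.Quotient.mk branchIdeal2 (v 3))) :=
  rfl

lemma z2_mem_b1 : z2 ∈ branchIdeal1 := Ideal.subset_span (by left; rfl)
lemma th2_mem_b1 : th2 ∈ branchIdeal1 := Ideal.subset_span (by right; rfl)
lemma z1_mem_b2 : z1 ∈ branchIdeal2 := Ideal.subset_span (by left; rfl)
lemma th1_mem_b2 : th1 ∈ branchIdeal2 := Ideal.subset_span (by right; rfl)

lemma mkb1_z2 : Ideal.Quotient.mk branchIdeal1 z2 = 0 :=
  Ideal.Quotient.eq_zero_iff_mem.mpr z2_mem_b1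
lemma mkb1_th2 : Ideal.Quotient.mk branchIdeal1 th2 = 0 :=
  Ideal.Quotient.eq_zero_iff_mem.mpr th2_mem_b1
lemma mkb2_z1 : Ideal.Quotient.mk branchIdeal2 z1 = 0 :=
  Ideal.Quotient.eq_zero_iff_mem.mpr z1_mem_b2
lemma mkb2_th1 : Ideal.Quotient.mk branchIdeal2 th1 = 0 :=
  Ideal.Quotient.eq_zero_iff_mem.mpr th1_mem_b2

lemma rel_le_ker : omegaRelMod0 ≤ LinearMap.ker psi0 := by
  rw [omegaRelMod0, Submodule.span_le]
  rintro x hx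
  simp only [omegaRels0, Set.mem_insert_iff, Set.mem_singleton_iff] at hx
  rcases hx with rfl | rfl | rfl | rfl <;>
  · rw [SetLike.mem_coe, LinearMap.mem_ker, psi0_apply]
    simp [dd, Pi.single_apply, mkb1_z2, mkb1_th2, mkb2_z1, mkb2_th1, Prod.ext_iff]

end NSAux
namespace NSAux

/-- The map `φ`. -/
def phi : Omega0 →ₗ[A0] (A1 × A1) × (A2 × A2) :=
  omegaRelMod0.liftQ psi0 rel_le_ker

lemma phi_mk (v : Fin 4 → A0) :
    phi (Submodule.Quotient.mk v) =
      ((Ideal.Quotient.mk branchIdeal1 (v 0), Ideal.Quotient.mk branchIdeal1 (v 2)),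
       (Ideal.Quotient.mk branchIdeal2 (v 1), Ideal.Quotient.mk branchIdeal2 (v 3))) := by
  rw [phi, Submodule.liftQ_apply, psi0_apply]

lemma kfam_mem_ker (i : Fin 4) : kfam i ∈ LinearMap.ker phi := by
  rw [LinearMap.mem_ker]
  fin_cases i
  · show phi (kfam 0) = 0
    rw [kfam0, phi_mk]
    simp [dd, Pi.single_apply, mkb2_z1, Prod.ext_iff]
  · show phi (kfam 1) = 0
    rw [kfam1, phi_mk]
    simp [dd, Pi.single_apply, mkb2_z1, Prod.ext_iff]
  · show phi (kfam 2) = 0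
    rw [kfam2, phi_mk]
    simp [dd, Pi.single_apply, mkb1_z2, Prod.ext_iff]
  · show phi (kfam 3) = 0
    rw [kfam3, phi_mk]
    simp [dd, Pi.single_apply, mkb2_th1, Prod.ext_iff]

lemma ker_le_S : ((LinearMap.ker phi).restrictScalars ℂ : Set Omega0) ⊆ S := by
  intro x hx
  obtain ⟨v, rfl⟩ := Submodule.Quotient.mk_surjective _ x
  have h : phi (Submodule.Quotient.mk v) = 0 := hx
  rw [phi_mk] at h
  rw [Prod.ext_iff, Prod.ext_iff, Prod.ext_iff] at h
  obtain ⟨⟨e0, e2⟩, e1, e3⟩ := h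
  exact mk_mem_S_of_branches
    (Ideal.Quotient.eq_zero_iff_mem.mp e0) (Ideal.Quotient.eq_zero_iff_mem.mp e1)
    (Ideal.Quotient.eq_zero_iff_mem.mp e2) (Ideal.Quotient.eq_zero_iff_mem.mp e3)

end NSAux
namespace NSAux

open DualNumber TrivSqZeroExt

lemma aeval_vanish {B : Type} [CommRing B] [Algebra ℂ B] (w : Fin 4 → B)
    (h01 : w 0 * w 1 = 0) (h03 : w 0 * w 3 = 0) (h12 : w 1 * w 2 = 0)
    (h23 : w 2 * w 3 = 0) (h22 : w 2 * w 2 = 0) (h33 : w 3 * w 3 = 0) :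
    ∀ a : P4, a ∈ nsIdeal0 → (aeval w) a = 0 := by
  intro a ha
  have hle : nsIdeal0 ≤ RingHom.ker ((aeval w : P4 →ₐ[ℂ] B) : P4 →+* B) := by
    rw [nsIdeal0, Ideal.span_le]
    rintro p hp
    simp only [Set.mem_insert_iff, Set.mem_singleton_iff] at hp
    rcases hp with rfl | rfl | rfl | rfl | rfl | rfl <;>
      simp [RingHom.mem_ker, pow_two, h01, h03, h12, h23, h22, h33]
  exact hle ha

/-- Evaluation `z₁ ↦ ε`, other variables to `0`. -/
def E1 : A0 →ₐ[ℂ] DualNumber ℂ :=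
  Ideal.Quotient.liftₐ nsIdeal0 (aeval ![ε, 0, 0, 0])
    (aeval_vanish _ (by simp) (by simp) (by simp) (by simp) (by simp) (by simp))

/-- Evaluation `z₂ ↦ ε`. -/
def E2 : A0 →ₐ[ℂ] DualNumber ℂ :=
  Ideal.Quotient.liftₐ nsIdeal0 (aeval ![0, ε, 0, 0])
    (aeval_vanish _ (by simp) (by simp) (by simp) (by simp) (by simp) (by simp))

/-- Evaluation `θ₁ ↦ ε`. -/
def E3 : A0 →ₐ[ℂ] DualNumber ℂ :=
  Ideal.Quotient.liftₐ nsIdeal0 (aeval ![0, 0, ε, 0])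
    (aeval_vanish _ (by simp) (by simp) (by simp)
      (by simp) (by simpa using eps_mul_eps) (by simp))

/-- Evaluation `θ₂ ↦ ε`. -/
def E4 : A0 →ₐ[ℂ] DualNumber ℂ :=
  Ideal.Quotient.liftₐ nsIdeal0 (aeval ![0, 0, 0, ε])
    (aeval_vanish _ (by simp) (by simp) (by simp)
      (by simp) (by simp) (by simpa using eps_mul_eps))

/-- Evaluation at `0`. -/
def E0 : A0 →ₐ[ℂ] ℂ :=
  Ideal.Quotient.liftₐ nsIdeal0 (aeval 0)
    (aeval_vanish _ (by simp) (by simp) (by simp) (by simp) (by simp) (by simp))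

end NSAux
namespace NSAux

open DualNumber TrivSqZeroExt

lemma E1_z1 : E1 z1 = ε := by
  rw [z1, E1, Ideal.Quotient.liftₐ_apply]; erw [Ideal.Quotient.lift_mk]; simp
lemma E1_z2 : E1 z2 = 0 := by
  rw [z2, E1, Ideal.Quotient.liftₐ_apply]; erw [Ideal.Quotient.lift_mk]; simp
lemma E1_th1 : E1 th1 = 0 := by
  rw [th1, E1, Ideal.Quotient.liftₐ_apply]; erw [Ideal.Quotient.lift_mk]; simp
lemma E1_th2 : E1 th2 = 0 := by
  rw [th2, E1, Ideal.Quotient.liftₐ_apply]; erw [Ideal.Quotient.lift_mk]; simp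

lemma E2_z1 : E2 z1 = 0 := by
  rw [z1, E2, Ideal.Quotient.liftₐ_apply]; erw [Ideal.Quotient.lift_mk]; simp
lemma E2_z2 : E2 z2 = ε := by
  rw [z2, E2, Ideal.Quotient.liftₐ_apply]; erw [Ideal.Quotient.lift_mk]; simp
lemma E2_th1 : E2 th1 = 0 := by
  rw [th1, E2, Ideal.Quotient.liftₐ_apply]; erw [Ideal.Quotient.lift_mk]; simp
lemma E2_th2 : E2 th2 = 0 := by
  rw [th2, E2, Ideal.Quotient.liftₐ_apply]; erw [Ideal.Quotient.lift_mk]; simp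

lemma E3_z1 : E3 z1 = 0 := by
  rw [z1, E3, Ideal.Quotient.liftₐ_apply]; erw [Ideal.Quotient.lift_mk]; simp
lemma E3_z2 : E3 z2 = 0 := by
  rw [z2, E3, Ideal.Quotient.liftₐ_apply]; erw [Ideal.Quotient.lift_mk]; simp
lemma E3_th1 : E3 th1 = ε := by
  rw [th1, E3, Ideal.Quotient.liftₐ_apply]; erw [Ideal.Quotient.lift_mk]; simp
lemma E3_th2 : E3 th2 = 0 := by
  rw [th2, E3, Ideal.Quotient.liftₐ_apply]; erw [Ideal.Quotient.lift_mk]; simp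

lemma E4_z1 : E4 z1 = 0 := by
  rw [z1, E4, Ideal.Quotient.liftₐ_apply]; erw [Ideal.Quotient.lift_mk]; simp
lemma E4_z2 : E4 z2 = 0 := by
  rw [z2, E4, Ideal.Quotient.liftₐ_apply]; erw [Ideal.Quotient.lift_mk]; simp
lemma E4_th1 : E4 th1 = 0 := by
  rw [th1, E4, Ideal.Quotient.liftₐ_apply]; erw [Ideal.Quotient.lift_mk]; simp
lemma E4_th2 : E4 th2 = ε := by
  rw [th2, E4, Ideal.Quotient.liftₐ_apply]; erw [Ideal.Quotient.lift_mk]; simp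

lemma fst_E1 (a : A0) : (E1 a).fst = E0 a := by
  have h : (TrivSqZeroExt.fstHom ℂ ℂ ℂ).comp E1 = E0 := by
    apply Ideal.Quotient.algHom_ext
    apply MvPolynomial.algHom_ext
    intro i
    fin_cases i <;>
      simp [E1, E0, Ideal.Quotient.mkₐ_eq_mk, Ideal.Quotient.liftₐ_apply] <;>
      (erw [Ideal.Quotient.lift_mk]; simp)
  exact AlgHom.congr_fun h a
end NSAux
namespace NSAux

open DualNumber TrivSqZeroExt

lemma fst_E2 (a : A0) : (E2 a).fst = E0 a := by
  have h : (TrivSqZeroExt.fstHom ℂ ℂ ℂ).comp E2 = E0 := by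
    apply Ideal.Quotient.algHom_ext
    apply MvPolynomial.algHom_ext
    intro i
    fin_cases i <;>
      simp [E2, E0, Ideal.Quotient.mkₐ_eq_mk, Ideal.Quotient.liftₐ_apply] <;>
      (erw [Ideal.Quotient.lift_mk]; simp)
  exact AlgHom.congr_fun h a

lemma fst_E3 (a : A0) : (E3 a).fst = E0 a := by
  have h : (TrivSqZeroExt.fstHom ℂ ℂ ℂ).comp E3 = E0 := by
    apply Ideal.Quotient.algHom_ext
    apply MvPolynomial.algHom_ext
    intro i
    fin_cases i <;>
      simp [E3, E0, Ideal.Quotient.mkₐ_eq_mk, Ideal.Quotient.liftₐ_apply] <;>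
      (erw [Ideal.Quotient.lift_mk]; simp)
  exact AlgHom.congr_fun h a

lemma fst_E4 (a : A0) : (E4 a).fst = E0 a := by
  have h : (TrivSqZeroExt.fstHom ℂ ℂ ℂ).comp E4 = E0 := by
    apply Ideal.Quotient.algHom_ext
    apply MvPolynomial.algHom_ext
    intro i
    fin_cases i <;>
      simp [E4, E0, Ideal.Quotient.mkₐ_eq_mk, Ideal.Quotient.liftₐ_apply] <;>
      (erw [Ideal.Quotient.lift_mk]; simp)
  exact AlgHom.congr_fun h a

lemma coeff_eq {x : DualNumber ℂ} {c : ℂ} (h : c • (ε : DualNumber ℂ) = x * ε) :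
    c = x.fst := by
  have := congrArg TrivSqZeroExt.snd h
  simpa [TrivSqZeroExt.snd_mul, TrivSqZeroExt.snd_smul] using this

lemma coeff_zero {x : DualNumber ℂ} (h : (0 : DualNumber ℂ) = x * ε) :
    x.fst = 0 := by
  have := congrArg TrivSqZeroExt.snd h
  simpa [TrivSqZeroExt.snd_mul] using this.symm

lemma coeff_neg {x : DualNumber ℂ} {c : ℂ} (h : c • (ε : DualNumber ℂ) = -(x * ε)) :
    c = -x.fst := by
  have := congrArg TrivSqZeroExt.snd h
  simpa [TrivSqZeroExt.snd_mul, TrivSqZeroExt.snd_smul] using this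

lemma lin_indep : LinearIndependent ℂ kfam := by
  rw [Fintype.linearIndependent_iff]
  intro g hg
  rw [Fin.sum_univ_four, kfam0, kfam1, kfam2, kfam3,
    ← Submodule.Quotient.mk_smul, ← Submodule.Quotient.mk_smul,
    ← Submodule.Quotient.mk_smul, ← Submodule.Quotient.mk_smul,
    ← Submodule.Quotient.mk_add, ← Submodule.Quotient.mk_add,
    ← Submodule.Quotient.mk_add, Submodule.Quotient.mk_eq_zero] at hg
  rw [omegaRelMod0, omegaRels0, Submodule.mem_span_insert] at hg
  obtain ⟨a, y1, hy1, he1⟩ := hg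
  rw [Submodule.mem_span_insert] at hy1
  obtain ⟨b, y2, hy2, he2⟩ := hy1
  rw [Submodule.mem_span_insert] at hy2
  obtain ⟨c, y3, hy3, he3⟩ := hy2
  rw [Submodule.mem_span_singleton] at hy3
  obtain ⟨d, rfl⟩ := hy3
  subst he3; subst he2
  have h0 := congrFun he1 0
  have h1 := congrFun he1 1
  have h2 := congrFun he1 2
  have h3 := congrFun he1 3
  simp only [Pi.add_apply, Pi.sub_apply, Pi.smul_apply, dd, Pi.single_apply,
    smul_eq_mul, mul_one, mul_zero, add_zero, zero_add, smul_zero, mul_neg,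
    sub_self, sub_zero, zero_sub,
    show ((0:Fin 4) = 1) = False by decide, show ((0:Fin 4) = 2) = False by decide,
    show ((0:Fin 4) = 3) = False by decide, show ((1:Fin 4) = 0) = False by decide,
    show ((1:Fin 4) = 2) = False by decide, show ((1:Fin 4) = 3) = False by decide,
    show ((2:Fin 4) = 0) = False by decide, show ((2:Fin 4) = 1) = False by decide,
    show ((2:Fin 4) = 3) = False by decide, show ((3:Fin 4) = 0) = False by decide,
    show ((3:Fin 4) = 1) = False by decide, show ((3:Fin 4) = 2) = False by decide,
    if_true, if_false, ite_true, ite_false] at h0 h1 h2 h3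
  -- h0 : 0 = a * z2 + b * th2
  -- h1 : g 0 • z1 = a * z1 + c * th1
  -- h2 : g 2 • z2 = c * z2 + d * th2
  -- h3 : g 1 • z1 + g 3 • th1 = b * z1 + -(d * th1)
  have q1 : g 0 • (ε : DualNumber ℂ) = E1 a * ε := by
    have := congrArg E1 h1
    simpa [map_add, map_mul, map_smul, E1_z1, E1_th1] using this
  have q2 : (0 : DualNumber ℂ) = E2 a * ε := by
    have := congrArg E2 h0
    simpa [map_add, map_mul, E2_z2, E2_th2] using this
  have q3 : (0 : DualNumber ℂ) = E3 c * ε := by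
    have := congrArg E3 h1
    simpa [map_add, map_mul, map_smul, E3_z1, E3_th1] using this
  have q4 : g 2 • (ε : DualNumber ℂ) = E2 c * ε := by
    have := congrArg E2 h2
    simpa [map_add, map_mul, map_smul, E2_z2, E2_th2] using this
  have q5 : (0 : DualNumber ℂ) = E4 b * ε := by
    have := congrArg E4 h0
    simpa [map_add, map_mul, E4_z2, E4_th2] using this
  have q6 : g 1 • (ε : DualNumber ℂ) = E1 b * ε := by
    have := congrArg E1 h3
    simpa [map_add, map_mul, map_neg, map_smul, E1_z1, E1_th1] using this
  have q7 : (0 : DualNumber ℂ) = E4 d * ε := by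
    have := congrArg E4 h2
    simpa [map_add, map_mul, map_smul, E4_z2, E4_th2] using this
  have q8 : g 3 • (ε : DualNumber ℂ) = -(E3 d * ε) := by
    have := congrArg E3 h3
    simpa [map_add, map_mul, map_neg, map_smul, E3_z1, E3_th1] using this
  have g0 : g 0 = 0 := by
    have := coeff_eq q1
    rw [fst_E1] at this
    have h' := coeff_zero q2
    rw [fst_E2] at h'
    rw [this, h']
  have g1 : g 1 = 0 := by
    have := coeff_eq q6
    rw [fst_E1] at this
    have h' := coeff_zero q5
    rw [fst_E4] at h'
    rw [this, h']
  have g2 : g 2 = 0 := by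
    have := coeff_eq q4
    rw [fst_E2] at this
    have h' := coeff_zero q3
    rw [fst_E3] at h'
    rw [this, h']
  have g3 : g 3 = 0 := by
    have := coeff_neg q8
    rw [fst_E3] at this
    have h' := coeff_zero q7
    rw [fst_E4] at h'
    rw [this, h', neg_zero]
  intro i
  fin_cases i
  · exact g0
  · exact g1
  · exact g2
  · exact g3

end NSAux

/-- the `A₀`-linear map `φ : Ω → (A₁ ⊕ A₁) ⊕ (A₂ ⊕ A₂)` sending the class
of `a·dz₁ + b·dz₂ + c·dθ₁ + e·dθ₂` to `((p₁ a, p₁ c), (p₂ b, p₂ e))` is well defined, and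
its kernel is a four-dimensional ℂ-vector space with basis the classes of
`z₁·dz₂`, `z₁·dθ₂`, `z₂·dθ₁`, `θ₁·dθ₂`. -/
theorem kernel_of_branch_restriction :
    ∃ φ : Omega0 →ₗ[A0] (A1 × A1) × (A2 × A2),
      (∀ v : Fin 4 → A0,
        φ (Submodule.Quotient.mk v) =
          ((Ideal.Quotient.mk branchIdeal1 (v 0), Ideal.Quotient.mk branchIdeal1 (v 2)),
           (Ideal.Quotient.mk branchIdeal2 (v 1), Ideal.Quotient.mk branchIdeal2 (v 3)))) ∧
      LinearIndependent ℂ kfam ∧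
      Submodule.span ℂ (Set.range kfam) = (LinearMap.ker φ).restrictScalars ℂ := by
  refine ⟨NSAux.phi, NSAux.phi_mk, NSAux.lin_indep, ?_⟩
  apply le_antisymm
  · rw [Submodule.span_le]
    rintro x ⟨i, rfl⟩
    exact NSAux.kfam_mem_ker i
  · intro x hx
    exact NSAux.ker_le_S hx

end
end
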